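/- Let α ∈ (1,2), h > 0, λ ≥ 0, and let γ₄ be real. Then the series of third-order tempered-WSGD weights ∑_{k=0}^{∞} g_{k,λ} converges, and its sum equals φ(λ) = (γ₁e^{hλ} + γ₂ + γ₃e^{−hλ} + γ₄e^{−2hλ})(1 − e^{−hλ})^α. -/

import Mathlib

open Finset Filter


lemma wsgd_rec (α : ℝ) (ω : ℕ → ℝ)
    (hω : ∀ k : ℕ, ω k =
      (-1 : ℝ) ^ k * (∏ i ∈ Finset.range k, (α - (i : ℝ))) / (Nat.factorial k : ℝ)) :
    ∀ k : ℕ, ((k : ℝ) + 1) * ω (k + 1) = ((k : ℝ) - α) * ω k := by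
  intro k
  have hf : ((Nat.factorial k : ℝ)) ≠ 0 := by positivity
  rw [hω, hω, Finset.prod_range_succ, Nat.factorial_succ]
  push_cast
  field_simp
  ring

lemma wsgd_nonneg (α : ℝ) (hα1 : 1 < α) (hα2 : α < 2) (ω : ℕ → ℝ)
    (hω : ∀ k : ℕ, ω k =
      (-1 : ℝ) ^ k * (∏ i ∈ Finset.range k, (α - (i : ℝ))) / (Nat.factorial k : ℝ)) :
    ∀ n : ℕ, 0 ≤ ω (n + 2) := by
  have hrec := wsgd_rec α ω hω
  intro n
  induction n with
  | zero =>
    have h2 : ω 2 = α * (α - 1) / 2 := by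
      rw [hω]
      rw [Finset.prod_range_succ, Finset.prod_range_succ, Finset.prod_range_zero]
      norm_num
    rw [h2]
    have : 0 < α - 1 := by linarith
    positivity
  | succ n ih =>
    have h := hrec (n + 2)
    have hk : (0:ℝ) < (n:ℝ) + 2 + 1 := by positivity
    have : ω (n + 3) = (((n:ℝ) + 2) - α) * ω (n + 2) / ((n:ℝ) + 2 + 1) := by
      push_cast at h ⊢
      field_simp
      linarith [h]
    rw [show n + 1 + 2 = n + 3 from rfl, this]
    have : (0:ℝ) ≤ ((n:ℝ) + 2) - α := by
      have : (0:ℝ) ≤ (n:ℝ) := Nat.cast_nonneg n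
      linarith
    positivity

-- summability of k * |ω k|
lemma wsgd_summable_mul (α : ℝ) (hα1 : 1 < α) (hα2 : α < 2) (ω : ℕ → ℝ)
    (hω : ∀ k : ℕ, ω k =
      (-1 : ℝ) ^ k * (∏ i ∈ Finset.range k, (α - (i : ℝ))) / (Nat.factorial k : ℝ)) :
    Summable (fun k : ℕ => (k : ℝ) * |ω k|) := by
  have hrec := wsgd_rec α ω hω
  have hpos := wsgd_nonneg α hα1 hα2 ω hω
  -- d k = k (k-1) ω k
  set d : ℕ → ℝ := fun k => (k : ℝ) * ((k : ℝ) - 1) * ω k with hd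
  have htel : ∀ k : ℕ, d k - d (k + 1) = (α - 1) * ((k : ℝ) * ω k) := by
    intro k
    have h := hrec k
    simp only [hd]
    push_cast
    nlinarith [h]
  have hdnn : ∀ n : ℕ, 0 ≤ d (n + 2) := by
    intro n
    have := hpos n
    have h1 : (0:ℝ) ≤ ((n:ℝ) + 2) := by positivity
    have h2 : (0:ℝ) ≤ ((n:ℝ) + 2) - 1 := by
      have hn : (0:ℝ) ≤ (n:ℝ) := Nat.cast_nonneg n
      linarith
    simp only [hd]
    push_cast
    exact mul_nonneg (mul_nonneg h1 h2) this
  -- partial sums of shifted series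
  have hps : ∀ n : ℕ, ∑ i ∈ Finset.range n, (α - 1) * (((i:ℕ) + 2 : ℕ) : ℝ) * ω (i + 2)
      = d 2 - d (n + 2) := by
    intro n
    induction n with
    | zero => simp
    | succ n ih =>
      rw [Finset.sum_range_succ, ih, show n + 1 + 2 = n + 2 + 1 from rfl]
      have := htel (n + 2)
      push_cast at this ⊢
      linarith
  have hsum2 : Summable (fun n : ℕ => (((n : ℕ) + 2 : ℕ) : ℝ) * ω (n + 2)) := by
    apply summable_of_sum_range_le (c := d 2 / (α - 1))
    · intro n
      have := hpos n
      positivity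
    · intro n
      have h := hps n
      have hα : (0:ℝ) < α - 1 := by linarith
      have h2 : ∑ i ∈ Finset.range n, (α - 1) * (((i:ℕ) + 2 : ℕ) : ℝ) * ω (i + 2)
          = (α - 1) * ∑ i ∈ Finset.range n, (((i:ℕ) + 2 : ℕ) : ℝ) * ω (i + 2) := by
        rw [Finset.mul_sum]; apply Finset.sum_congr rfl; intro i _; ring
      rw [h2] at h
      have hdn := hdnn n
      rw [le_div_iff₀ hα]
      nlinarith [h]
  rw [← summable_nat_add_iff 2]
  apply hsum2.congr
  intro n
  rw [abs_of_nonneg (hpos n)]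

lemma wsgd_summable_abs (α : ℝ) (hα1 : 1 < α) (hα2 : α < 2) (ω : ℕ → ℝ)
    (hω : ∀ k : ℕ, ω k =
      (-1 : ℝ) ^ k * (∏ i ∈ Finset.range k, (α - (i : ℝ))) / (Nat.factorial k : ℝ)) :
    Summable (fun k : ℕ => |ω k|) := by
  have h := wsgd_summable_mul α hα1 hα2 ω hω
  rw [← summable_nat_add_iff 1]
  refine Summable.of_nonneg_of_le (fun n => abs_nonneg _) (fun n => ?_)
    ((summable_nat_add_iff 1).2 h)
  have h1 : (1:ℝ) ≤ (((n:ℕ) + 1 : ℕ) : ℝ) := by push_cast; linarith [Nat.cast_nonneg (α := ℝ) n]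
  nlinarith [abs_nonneg (ω (n+1))]

lemma wsgd_hasSum_one (α : ℝ) (hα1 : 1 < α) (hα2 : α < 2) (ω : ℕ → ℝ)
    (hω : ∀ k : ℕ, ω k =
      (-1 : ℝ) ^ k * (∏ i ∈ Finset.range k, (α - (i : ℝ))) / (Nat.factorial k : ℝ)) :
    HasSum ω 0 := by
  have hrec := wsgd_rec α ω hω
  have hsummul := wsgd_summable_mul α hα1 hα2 ω hω
  have hsummable : Summable ω := by
    apply Summable.of_abs (wsgd_summable_abs α hα1 hα2 ω hω)
  -- partial sums: α * ∑_{i<n} ω i = - n * ω n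
  have hps : ∀ n : ℕ, α * ∑ i ∈ Finset.range n, ω i = -((n:ℝ) * ω n) := by
    intro n
    induction n with
    | zero => simp
    | succ n ih =>
      rw [Finset.sum_range_succ, mul_add, ih]
      have := hrec n
      push_cast
      linarith
  have hlim : Filter.Tendsto (fun n : ℕ => (n:ℝ) * ω n) Filter.atTop (nhds 0) := by
    apply squeeze_zero_norm (fun n => ?_) hsummul.tendsto_atTop_zero
    rw [Real.norm_eq_abs, abs_mul, Nat.abs_cast]
  have hα0 : α ≠ 0 := by linarith
  have : Filter.Tendsto (fun n : ℕ => ∑ i ∈ Finset.range n, ω i) Filter.atTop (nhds 0) := by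
    have : (fun n : ℕ => ∑ i ∈ Finset.range n, ω i) = fun n : ℕ => -((n:ℝ) * ω n) / α := by
      funext n
      rw [← hps n]
      field_simp
    rw [this]
    have := hlim.neg.div_const α
    simpa using this
  exact (Summable.hasSum_iff_tendsto_nat hsummable).2 this

lemma wsgd_summable_pow (α : ℝ) (hα1 : 1 < α) (hα2 : α < 2) (ω : ℕ → ℝ)
    (hω : ∀ k : ℕ, ω k =
      (-1 : ℝ) ^ k * (∏ i ∈ Finset.range k, (α - (i : ℝ))) / (Nat.factorial k : ℝ))
    (x : ℝ) (hx : |x| ≤ 1) :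
    Summable (fun k : ℕ => ω k * x ^ k) := by
  apply Summable.of_norm_bounded (wsgd_summable_abs α hα1 hα2 ω hω)
  intro k
  rw [Real.norm_eq_abs, abs_mul, abs_pow]
  calc |ω k| * |x| ^ k ≤ |ω k| * 1 := by
        apply mul_le_mul_of_nonneg_left _ (abs_nonneg _)
        exact pow_le_one₀ (abs_nonneg _) hx
    _ = |ω k| := mul_one _

lemma wsgd_binom (α : ℝ) (hα1 : 1 < α) (hα2 : α < 2) (ω : ℕ → ℝ)
    (hω : ∀ k : ℕ, ω k =
      (-1 : ℝ) ^ k * (∏ i ∈ Finset.range k, (α - (i : ℝ))) / (Nat.factorial k : ℝ))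
    (z : ℝ) (hz0 : 0 ≤ z) (hz1 : z < 1) :
    HasSum (fun k : ℕ => ω k * z ^ k) ((1 - z) ^ α) := by
  have hrec := wsgd_rec α ω hω
  have hu : Summable (fun k : ℕ => (k : ℝ) * |ω k|) := wsgd_summable_mul α hα1 hα2 ω hω
  set F : ℝ → ℝ := fun x => ∑' k : ℕ, ω k * x ^ k with hF
  set g' : ℕ → ℝ → ℝ := fun k x => ω k * ((k : ℝ) * x ^ (k - 1)) with hg'
  have hder : ∀ (k : ℕ) (x : ℝ), HasDerivAt (fun x => ω k * x ^ k) (g' k x) x :=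
    fun k x => (hasDerivAt_pow k x).const_mul (ω k)
  have hbound : ∀ (k : ℕ) (y : ℝ), y ∈ Set.Ioo (-1 : ℝ) 1 → ‖g' k y‖ ≤ (k : ℝ) * |ω k| := by
    intro k y hy
    have hy1 : |y| ≤ 1 := by
      rw [abs_le]; exact ⟨le_of_lt hy.1, le_of_lt hy.2⟩
    rw [hg']
    simp only [Real.norm_eq_abs, abs_mul, Nat.abs_cast, abs_pow]
    calc |ω k| * ((k:ℝ) * |y| ^ (k-1)) ≤ |ω k| * ((k:ℝ) * 1) := by
          apply mul_le_mul_of_nonneg_left _ (abs_nonneg _)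
          apply mul_le_mul_of_nonneg_left _ (Nat.cast_nonneg k)
          exact pow_le_one₀ (abs_nonneg _) hy1
      _ = (k:ℝ) * |ω k| := by ring
  have hsum0 : Summable (fun k : ℕ => ω k * (0:ℝ) ^ k) :=
    wsgd_summable_pow α hα1 hα2 ω hω 0 (by norm_num)
  have hFder : ∀ y ∈ Set.Ioo (-1 : ℝ) 1, HasDerivAt F (∑' k : ℕ, g' k y) y := by
    intro y hy
    exact hasDerivAt_tsum_of_isPreconnected hu isOpen_Ioo (convex_Ioo _ _).isPreconnected
      (fun k x _ => hder k x) hbound (by norm_num : (0:ℝ) ∈ Set.Ioo (-1:ℝ) 1) hsum0 hy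
  -- summability facts at a point y with |y| ≤ 1
  have hSg' : ∀ y : ℝ, |y| ≤ 1 → Summable (fun k : ℕ => g' k y) := by
    intro y hy
    apply Summable.of_norm_bounded hu
    intro k
    rw [hg']
    simp only [Real.norm_eq_abs, abs_mul, Nat.abs_cast, abs_pow]
    calc |ω k| * ((k:ℝ) * |y| ^ (k-1)) ≤ |ω k| * ((k:ℝ) * 1) := by
          apply mul_le_mul_of_nonneg_left _ (abs_nonneg _)
          apply mul_le_mul_of_nonneg_left _ (Nat.cast_nonneg k)
          exact pow_le_one₀ (abs_nonneg _) hy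
      _ = (k:ℝ) * |ω k| := by ring
  have hSk : ∀ y : ℝ, |y| ≤ 1 → Summable (fun k : ℕ => (k : ℝ) * (ω k * y ^ k)) := by
    intro y hy
    apply Summable.of_norm_bounded hu
    intro k
    simp only [Real.norm_eq_abs, abs_mul, Nat.abs_cast, abs_pow]
    calc (k:ℝ) * (|ω k| * |y| ^ k) ≤ (k:ℝ) * (|ω k| * 1) := by
          apply mul_le_mul_of_nonneg_left _ (Nat.cast_nonneg k)
          apply mul_le_mul_of_nonneg_left _ (abs_nonneg _)
          exact pow_le_one₀ (abs_nonneg _) hy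
      _ = (k:ℝ) * |ω k| := by ring
  have hDid : ∀ y : ℝ, |y| ≤ 1 →
      (1 - y) * (∑' k : ℕ, g' k y) = -α * F y := by
    intro y hy
    have hSg := hSg' y hy
    have hSF := wsgd_summable_pow α hα1 hα2 ω hω y hy
    have hSkk := hSk y hy
    have step1 : (∑' k : ℕ, g' k y) = ∑' k : ℕ, ((k : ℝ) - α) * (ω k * y ^ k) := by
      rw [Summable.tsum_eq_zero_add hSg]
      have h0 : g' 0 y = 0 := by simp [hg']
      rw [h0, zero_add]
      congr 1
      funext k
      have h := hrec k
      rw [hg']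
      simp only [Nat.add_sub_cancel]
      push_cast
      linear_combination y ^ k * h
    have step2 : ∑' k : ℕ, ((k : ℝ) - α) * (ω k * y ^ k)
        = (∑' k : ℕ, (k : ℝ) * (ω k * y ^ k)) - α * F y := by
      have : (fun k : ℕ => ((k : ℝ) - α) * (ω k * y ^ k))
          = fun k : ℕ => (k : ℝ) * (ω k * y ^ k) - α * (ω k * y ^ k) := by
        funext k; ring
      rw [this, Summable.tsum_sub hSkk (hSF.mul_left α), tsum_mul_left]
    have step3 : (∑' k : ℕ, (k : ℝ) * (ω k * y ^ k)) = y * ∑' k : ℕ, g' k y := by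
      rw [← tsum_mul_left]
      congr 1
      funext k
      cases k with
      | zero => simp [hg']
      | succ n =>
        rw [hg']
        simp only [Nat.add_sub_cancel]
        push_cast
        rw [pow_succ]
        ring
    have key : (∑' k : ℕ, g' k y) = y * (∑' k : ℕ, g' k y) - α * F y :=
      step1.trans (step2.trans (by rw [step3]))
    linear_combination key
  -- H := F x * (1-x)^(-α) has zero derivative on Ioo (-1) 1
  set H : ℝ → ℝ := fun x => F x * (1 - x) ^ (-α) with hH
  have hHder : ∀ y ∈ Set.Ioo (-1 : ℝ) 1, HasDerivAt H 0 y := by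
    intro y hy
    have h1y : (0:ℝ) < 1 - y := by linarith [hy.2]
    have hy1 : |y| ≤ 1 := by rw [abs_le]; exact ⟨le_of_lt hy.1, le_of_lt hy.2⟩
    have hr : HasDerivAt (fun x : ℝ => (1 - x) ^ (-α)) (-1 * -α * (1 - y) ^ (-α - 1)) y := by
      have hbase : HasDerivAt (fun x : ℝ => 1 - x) (-1) y := by
        simpa using (hasDerivAt_id y).const_sub 1
      exact hbase.rpow_const (Or.inl h1y.ne')
    have hmul := (hFder y hy).mul hr
    have e1 : (1 - y) * (1 - y) ^ (-α - 1) = (1 - y) ^ (-α) := by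
      have h2 := Real.rpow_add h1y 1 (-α - 1)
      rw [Real.rpow_one] at h2
      rw [← h2]
      congr 1
      ring
    refine hmul.congr_deriv (Eq.symm ?_)
    rw [← e1]
    have hd := hDid y hy1
    linear_combination (-(1:ℝ)) * (1 - y) ^ (-α - 1) * hd
  -- constancy on [0, z]
  have hconst : H z = H 0 := by
    by_cases hz : z = 0
    · rw [hz]
    · have hzpos : 0 < z := lt_of_le_of_ne hz0 (Ne.symm hz)
      have := constant_of_has_deriv_right_zero
        (f := H) (a := 0) (b := z)
        (fun x hx => ((hHder x ⟨by linarith [hx.1], by linarith [hx.2]⟩).continuousAt).continuousWithinAt)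
        (fun x hx => ((hHder x ⟨by linarith [hx.1], by linarith [hx.2]⟩).hasDerivWithinAt))
      exact this z (Set.right_mem_Icc.2 hz0)
  have hF0 : F 0 = 1 := by
    rw [hF]
    simp only
    rw [tsum_eq_single 0 (fun j hj => by simp [zero_pow hj])]
    simp [hω]
  have hH0 : H 0 = 1 := by
    rw [hH]; simp only
    rw [hF0, sub_zero, Real.one_rpow, mul_one]
  have h1z : (0:ℝ) < 1 - z := by linarith
  have hFz : F z = (1 - z) ^ α := by
    have h := hconst
    rw [hH0, hH] at h
    simp only at h
    have hrw : (1 - z) ^ (-α) = ((1 - z) ^ α)⁻¹ := Real.rpow_neg h1z.le α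
    rw [hrw] at h
    have hpos : (0:ℝ) < (1 - z) ^ α := Real.rpow_pos_of_pos h1z α
    field_simp at h
    linarith
  have hzabs : |z| ≤ 1 := by rw [abs_of_nonneg hz0]; linarith
  have := (wsgd_summable_pow α hα1 hα2 ω hω z hzabs).hasSum
  rwa [show (∑' k : ℕ, ω k * z ^ k) = F z from rfl, hFz] at this




/-- the series of third-order tempered-WSGD weights converges, with sum
`φ(λ) = (γ₁e^{hλ} + γ₂ + γ₃e^{−hλ} + γ₄e^{−2hλ})(1 − e^{−hλ})^α`. -/
theorem tempered_WSGD_weights_hasSum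
    (α lam h γ₁ γ₂ γ₃ γ₄ : ℝ) (hα1 : 1 < α) (hα2 : α < 2) (hlam : 0 ≤ lam) (hh : 0 < h)
    (hγ₁ : γ₁ = α ^ 2 / 8 + 5 * α / 24 - γ₄)
    (hγ₂ : γ₂ = -α ^ 2 / 4 + α / 12 + 1 + 3 * γ₄)
    (hγ₃ : γ₃ = α ^ 2 / 8 - 7 * α / 24 - 3 * γ₄)
    (ω : ℕ → ℝ)
    (hω : ∀ k : ℕ, ω k =
      (-1 : ℝ) ^ k * (∏ i ∈ Finset.range k, (α - (i : ℝ))) / (Nat.factorial k : ℝ))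
    (g : ℕ → ℝ)
    (hg0 : g 0 = γ₁ * ω 0 * Real.exp (h * lam))
    (hg1 : g 1 = γ₁ * ω 1 + γ₂ * ω 0)
    (hg2 : g 2 = (γ₁ * ω 2 + γ₂ * ω 1 + γ₃ * ω 0) * Real.exp (-(h * lam)))
    (hgk : ∀ k : ℕ, 3 ≤ k → g k =
      (γ₁ * ω k + γ₂ * ω (k - 1) + γ₃ * ω (k - 2) + γ₄ * ω (k - 3)) *
        Real.exp (-((k : ℝ) - 1) * h * lam)) :
    HasSum g
      ((γ₁ * Real.exp (h * lam) + γ₂ + γ₃ * Real.exp (-(h * lam)) +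
          γ₄ * Real.exp (-2 * (h * lam))) * (1 - Real.exp (-(h * lam))) ^ α) := by
  set z : ℝ := Real.exp (-(h * lam)) with hzdef
  set e : ℝ := Real.exp (h * lam) with hedef
  have hez : e * z = 1 := by
    rw [hedef, hzdef, ← Real.exp_add, add_neg_cancel, Real.exp_zero]
  have hz0 : 0 < z := Real.exp_pos _
  have hz1 : z ≤ 1 := by
    rw [hzdef, show (1:ℝ) = Real.exp 0 from (Real.exp_zero).symm]
    exact Real.exp_le_exp.2 (by nlinarith)
  set S : ℝ := (1 - z) ^ α with hSdef
  have hS : HasSum (fun k : ℕ => ω k * z ^ k) S := by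
    rcases lt_or_eq_of_le hz1 with hlt | heq
    · exact wsgd_binom α hα1 hα2 ω hω z hz0.le hlt
    · rw [hSdef, heq, sub_self, Real.zero_rpow (by linarith : α ≠ 0)]
      have h1 := wsgd_hasSum_one α hα1 hα2 ω hω
      simpa [heq] using h1
  -- shifted series
  set Bf : ℕ → ℝ := fun k => match k with
    | 0 => 0
    | (j+1) => ω j * z ^ j with hBf
  set Cf : ℕ → ℝ := fun k => match k with
    | 0 => 0
    | 1 => 0
    | (j+2) => ω j * z ^ j with hCf
  set Df : ℕ → ℝ := fun k => match k with
    | 0 => 0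
    | 1 => 0
    | 2 => 0
    | (j+3) => ω j * z ^ j with hDf
  have hB : HasSum Bf S := by
    refine (Function.Injective.hasSum_iff (g := fun j : ℕ => j + 1)
      (fun a b hab => by simpa using hab) ?_).1 hS
    intro x hx
    match x with
    | 0 => rfl
    | (j+1) => exact absurd ⟨j, rfl⟩ hx
  have hC : HasSum Cf S := by
    refine (Function.Injective.hasSum_iff (g := fun j : ℕ => j + 2)
      (fun a b hab => by simpa using hab) ?_).1 hS
    intro x hx
    match x with
    | 0 => rfl
    | 1 => rfl
    | (j+2) => exact absurd ⟨j, rfl⟩ hx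
  have hD : HasSum Df S := by
    refine (Function.Injective.hasSum_iff (g := fun j : ℕ => j + 3)
      (fun a b hab => by simpa using hab) ?_).1 hS
    intro x hx
    match x with
    | 0 => rfl
    | 1 => rfl
    | 2 => rfl
    | (j+3) => exact absurd ⟨j, rfl⟩ hx
  have htot : HasSum
      (fun k => (γ₁ * e) * (ω k * z ^ k) + γ₂ * Bf k + (γ₃ * z) * Cf k + (γ₄ * z ^ 2) * Df k)
      ((γ₁ * e) * S + γ₂ * S + (γ₃ * z) * S + (γ₄ * z ^ 2) * S) :=
    (((hS.mul_left (γ₁ * e)).add (hB.mul_left γ₂)).add (hC.mul_left (γ₃ * z))).add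
      (hD.mul_left (γ₄ * z ^ 2))
  have hzpow : ∀ k : ℕ, Real.exp (-(((k : ℝ) + 3) - 1) * h * lam) = z ^ (k + 2) := by
    intro k
    rw [hzdef, ← Real.exp_nat_mul]
    congr 1
    push_cast
    ring
  have hgeq : g = fun k =>
      (γ₁ * e) * (ω k * z ^ k) + γ₂ * Bf k + (γ₃ * z) * Cf k + (γ₄ * z ^ 2) * Df k := by
    funext k
    match k with
    | 0 =>
      simp only [hBf, hCf, hDf, hg0]
      ring
    | 1 =>
      simp only [hBf, hCf, hDf, hg1]
      push_cast
      linear_combination (-(γ₁ * ω 1)) * hez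
    | 2 =>
      simp only [hBf, hCf, hDf, hg2, ← hzdef]
      push_cast
      linear_combination (-(γ₁ * ω 2 * z)) * hez
    | (k+3) =>
      have h3 := hgk (k + 3) (by omega)
      have e1 : k + 3 - 1 = k + 2 := rfl
      have e2 : k + 3 - 2 = k + 1 := rfl
      have e3 : k + 3 - 3 = k := rfl
      rw [e1, e2, e3] at h3
      have h4 : Real.exp (-(((k + 3 : ℕ) : ℝ) - 1) * h * lam) = z ^ (k + 2) := by
        have := hzpow k
        push_cast at this ⊢
        convert this using 3
      rw [h4] at h3
      simp only [hBf, hCf, hDf, h3]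
      linear_combination (-(γ₁ * ω (k + 3) * z ^ (k + 2))) * hez
  rw [hgeq]
  have hz2 : Real.exp (-2 * (h * lam)) = z ^ 2 := by
    rw [hzdef, show (-2 : ℝ) * (h * lam) = -(h * lam) + -(h * lam) by ring, Real.exp_add]
    ring
  rw [hz2]
  convert htot using 1
  ring
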